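/- arXiv:1110.6305 — 4 statements merged into one kernel-verified Lean document; each statement's English description precedes it below -/
import Mathlib

section
/- Let H be a Hilbert space and u, v partial isometries on H satisfying u v u = u and v u v = v. Then v = u*. -/
open scoped InnerProductSpace

/-- Orthogonality of range and kernel of a contractive idempotent. -/
lemma aux_orth {H : Type*} [NormedAddCommGroup H] [InnerProductSpace ℂ H]
    (e : H →L[ℂ] H) (hn : ‖e‖ ≤ 1) (a b : H) (ha : e a = a) (hb : e b = 0) :
    ⟪a, b⟫_ℂ = 0 := by
  by_contra hc
  set c : ℂ := ⟪a, b⟫_ℂ with hcdef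
  set s : ℝ := 1 / (‖b‖ ^ 2 + 1) with hs
  have hs0 : 0 < s := by positivity
  have hsb : s * ‖b‖ ^ 2 < 1 := by
    rw [hs, div_mul_eq_mul_div, one_mul, div_lt_one (by positivity)]
    linarith
  set t : ℂ := -(s : ℂ) * starRingEnd ℂ c with ht
  have key : ‖a‖ ≤ ‖a + t • b‖ := by
    have h1 : e (a + t • b) = a := by
      simp [map_add, map_smul, ha, hb]
    calc ‖a‖ = ‖e (a + t • b)‖ := by rw [h1]
      _ ≤ ‖e‖ * ‖a + t • b‖ := e.le_opNorm _
      _ ≤ 1 * ‖a + t • b‖ := by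
          apply mul_le_mul_of_nonneg_right hn (norm_nonneg _)
      _ = ‖a + t • b‖ := one_mul _
  have hsq : ‖a‖ ^ 2 ≤ ‖a + t • b‖ ^ 2 := by
    apply sq_le_sq' _ key
    linarith [norm_nonneg a, norm_nonneg (a + t • b)]
  have hexp : ‖a + t • b‖ ^ 2 = ‖a‖ ^ 2 + 2 * Complex.re ⟪a, t • b⟫_ℂ + ‖t • b‖ ^ 2 := by
    rw [@norm_add_sq ℂ] <;> norm_num [inner_smul_right]
  have hinner : ⟪a, t • b⟫_ℂ = t * c := by
    rw [inner_smul_right]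
  have hre : Complex.re ⟪a, t • b⟫_ℂ = -s * Complex.normSq c := by
    rw [hinner, ht]
    have : -(s : ℂ) * starRingEnd ℂ c * c = -(s : ℂ) * (Complex.normSq c : ℂ) := by
      rw [mul_assoc, ← Complex.normSq_eq_conj_mul_self]
    rw [this]
    simp
  have hnt : ‖t‖ ^ 2 = s ^ 2 * Complex.normSq c := by
    rw [ht]
    rw [norm_mul, mul_pow, norm_neg]
    simp [Complex.sq_norm, Complex.normSq_conj, ← Complex.normSq_eq_norm_sq]
  have hntb : ‖t • b‖ ^ 2 = s ^ 2 * Complex.normSq c * ‖b‖ ^ 2 := by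
    rw [norm_smul, mul_pow, hnt]
  have h0 : (0:ℝ) ≤ 2 * (-s * Complex.normSq c) + s ^ 2 * Complex.normSq c * ‖b‖ ^ 2 := by
    have := hsq
    rw [hexp, hre, hntb] at this
    linarith
  have hpos : 0 < Complex.normSq c := by
    have := Complex.normSq_pos.mpr hc
    exact this
  nlinarith [mul_lt_mul_of_pos_left hsb (mul_pos hs0 hpos)]

lemma aux_selfAdjoint {H : Type*} [NormedAddCommGroup H] [InnerProductSpace ℂ H]
    [CompleteSpace H] (e : H →L[ℂ] H) (he : e * e = e) (hn : ‖e‖ ≤ 1) :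
    star e = e := by
  rw [ContinuousLinearMap.star_eq_adjoint]
  symm
  rw [ContinuousLinearMap.eq_adjoint_iff]
  intro x y
  have hfix : ∀ z, e (e z) = e z := fun z => by
    have := congrArg (fun f => f z) he
    simpa [ContinuousLinearMap.mul_apply] using this
  have h1 : ⟪e x, y - e y⟫_ℂ = 0 :=
    aux_orth e hn (e x) (y - e y) (hfix x) (by simp [map_sub, hfix])
  have h2 : ⟪e y, x - e x⟫_ℂ = 0 :=
    aux_orth e hn (e y) (x - e x) (hfix y) (by simp [map_sub, hfix])
  have h2' : ⟪x - e x, e y⟫_ℂ = 0 := by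
    rw [← inner_conj_symm, h2]; simp
  have e1 : ⟪e x, y⟫_ℂ = ⟪e x, e y⟫_ℂ := by
    have := inner_sub_right (𝕜 := ℂ) (e x) y (e y)
    rw [h1] at this
    linear_combination -this
  have e2 : ⟪x, e y⟫_ℂ = ⟪e x, e y⟫_ℂ := by
    have := inner_sub_left (𝕜 := ℂ) x (e x) (e y)
    rw [h2'] at this
    linear_combination -this
  rw [e1, e2]

lemma aux_norm_le_one {H : Type*} [NormedAddCommGroup H] [InnerProductSpace ℂ H]
    [CompleteSpace H] (u : H →L[ℂ] H) (hu : u * star u * u = u) : ‖u‖ ≤ 1 := by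
  set a : H →L[ℂ] H := star u * u with hadef
  have ha : a * a = a := by
    calc a * a = star u * (u * star u * u) := by rw [hadef]; noncomm_ring
      _ = a := by rw [hu]
  have hsa : star a = a := by simp [hadef, star_mul, mul_assoc]
  have hnorm : ‖a‖ = ‖a‖ * ‖a‖ := by
    rw [← CStarRing.norm_star_mul_self (x := a), hsa, ha]
  have hna : ‖a‖ ≤ 1 := by nlinarith [norm_nonneg a]
  have hcs : ‖u‖ * ‖u‖ = ‖a‖ := (CStarRing.norm_star_mul_self (x := u)).symm
  nlinarith [norm_nonneg u]

/-- If `u`, `v` are partial isometries on a Hilbert space with `u v u = u` and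
`v u v = v`, then `v = u*`. -/
theorem stmt_1 {H : Type*} [NormedAddCommGroup H] [InnerProductSpace ℂ H] [CompleteSpace H]
    (u v : H →L[ℂ] H)
    (hu : u * star u * u = u) (hv : v * star v * v = v)
    (huvu : u * v * u = u) (hvuv : v * u * v = v) :
    v = star u := by
  have hnu : ‖u‖ ≤ 1 := aux_norm_le_one u hu
  have hnv : ‖v‖ ≤ 1 := aux_norm_le_one v hv
  -- e = v * u is a self-adjoint idempotent
  have he : (v * u) * (v * u) = v * u := by
    calc (v * u) * (v * u) = v * (u * v * u) := by noncomm_ring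
      _ = v * u := by rw [huvu]
  have hne : ‖v * u‖ ≤ 1 := by
    calc ‖v * u‖ ≤ ‖v‖ * ‖u‖ := norm_mul_le _ _
      _ ≤ 1 := by nlinarith [norm_nonneg u, norm_nonneg v]
  have hes : star (v * u) = v * u := aux_selfAdjoint _ he hne
  -- f = u * v is a self-adjoint idempotent
  have hf : (u * v) * (u * v) = u * v := by
    calc (u * v) * (u * v) = u * (v * u * v) := by noncomm_ring
      _ = u * v := by rw [hvuv]
  have hnf : ‖u * v‖ ≤ 1 := by
    calc ‖u * v‖ ≤ ‖u‖ * ‖v‖ := norm_mul_le _ _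
      _ ≤ 1 := by nlinarith [norm_nonneg u, norm_nonneg v]
  have hfs : star (u * v) = u * v := aux_selfAdjoint _ hf hnf
  have hsp : star (star u * u) = star u * u := by simp [star_mul, mul_assoc]
  have hsq : star (u * star u) = u * star u := by simp [star_mul, mul_assoc]
  -- v * u = star u * u
  have hpe : (star u * u) * (v * u) = star u * u := by
    calc (star u * u) * (v * u) = star u * (u * v * u) := by noncomm_ring
      _ = star u * u := by rw [huvu]
  have hep : (v * u) * (star u * u) = v * u := by
    calc (v * u) * (star u * u) = v * (u * star u * u) := by noncomm_ring
      _ = v * u := by rw [hu]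
  have hE : v * u = star u * u := by
    have h1 : (v * u) * (star u * u) = star u * u := by
      have := congrArg star hpe
      rwa [star_mul, hes, hsp] at this
    rw [← h1, hep]
  -- u * v = u * star u
  have hqf : (u * star u) * (u * v) = u * v := by
    calc (u * star u) * (u * v) = (u * star u * u) * v := by noncomm_ring
      _ = u * v := by rw [hu]
  have hfq : (u * v) * (u * star u) = u * star u := by
    calc (u * v) * (u * star u) = (u * v * u) * star u := by noncomm_ring
      _ = u * star u := by rw [huvu]
  have hF : u * v = u * star u := by
    have h1 : (u * star u) * (u * v) = u * star u := by
      have := congrArg star hfq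
      rwa [star_mul, hfs, hsq] at this
    rw [← h1, hqf]
  have hstar : star u * u * star u = star u := by
    have := congrArg star hu
    simpa [star_mul, mul_assoc] using this
  calc v = v * u * v := hvuv.symm
    _ = v * (u * v) := by rw [mul_assoc]
    _ = v * (u * star u) := by rw [hF]
    _ = (v * u) * star u := by rw [mul_assoc]
    _ = (star u * u) * star u := by rw [hE]
    _ = star u := hstar
end

section
/- Let u be a power partial isometry on a Hilbert space, and set p_k := u*^k u^k, q_l := u^l u*^l for k, l ≥ 1. Then p_k p_l = p_{max(k,l)} and q_k q_l = q_{max(k,l)}. -/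
section aux

variable {R : Type*} [Ring R] [StarRing R]

lemma stmt10_aux1 (v : R) (h : ∀ k : ℕ, v ^ k * (star v) ^ k * v ^ k = v ^ k) (k m : ℕ) :
    ((star v) ^ k * v ^ k) * ((star v) ^ (k + m) * v ^ (k + m))
      = (star v) ^ (k + m) * v ^ (k + m) := by
  have hs : (star v) ^ k * v ^ k * (star v) ^ k = (star v) ^ k := by
    have := congrArg star (h k)
    simpa [star_pow, mul_assoc] using this
  calc ((star v) ^ k * v ^ k) * ((star v) ^ (k + m) * v ^ (k + m))
      = ((star v) ^ k * v ^ k * (star v) ^ k) * ((star v) ^ m * v ^ (k + m)) := by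
        simp [pow_add, mul_assoc]
    _ = (star v) ^ k * ((star v) ^ m * v ^ (k + m)) := by rw [hs]
    _ = (star v) ^ (k + m) * v ^ (k + m) := by simp [pow_add, mul_assoc]

lemma stmt10_aux2 (v : R) (h : ∀ k : ℕ, v ^ k * (star v) ^ k * v ^ k = v ^ k) (k m : ℕ) :
    ((star v) ^ (k + m) * v ^ (k + m)) * ((star v) ^ k * v ^ k)
      = (star v) ^ (k + m) * v ^ (k + m) := by
  calc ((star v) ^ (k + m) * v ^ (k + m)) * ((star v) ^ k * v ^ k)
      = (star v) ^ (k + m) * (v ^ m * (v ^ k * (star v) ^ k * v ^ k)) := by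
        simp only [add_comm k m, pow_add, mul_assoc]
    _ = (star v) ^ (k + m) * (v ^ m * v ^ k) := by rw [h k]
    _ = (star v) ^ (k + m) * v ^ (k + m) := by rw [add_comm k m, ← pow_add]

end aux

/-- For a power partial isometry `u` with `p_k = u*ᵏ uᵏ` and `q_l = uˡ u*ˡ`,
one has `p_k p_l = p_{max(k,l)}` and `q_k q_l = q_{max(k,l)}`. -/
theorem stmt_10 {H : Type*} [NormedAddCommGroup H] [InnerProductSpace ℂ H] [CompleteSpace H]
    (u : H →L[ℂ] H)
    (hpow : ∀ k : ℕ, 1 ≤ k → u ^ k * (star u) ^ k * u ^ k = u ^ k) :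
    ∀ k l : ℕ, 1 ≤ k → 1 ≤ l →
      ((star u) ^ k * u ^ k) * ((star u) ^ l * u ^ l) = (star u) ^ max k l * u ^ max k l ∧
      (u ^ k * (star u) ^ k) * (u ^ l * (star u) ^ l) = u ^ max k l * (star u) ^ max k l := by
  have h : ∀ k : ℕ, u ^ k * (star u) ^ k * u ^ k = u ^ k := by
    intro k
    rcases Nat.eq_zero_or_pos k with rfl | hk
    · simp
    · exact hpow k hk
  have hs : ∀ k : ℕ, (star u) ^ k * (star (star u)) ^ k * (star u) ^ k = (star u) ^ k := by
    intro k
    have := congrArg star (h k)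
    simpa [star_pow, mul_assoc] using this
  intro k l hk hl
  rcases le_total k l with hkl | hkl
  · obtain ⟨m, rfl⟩ := Nat.exists_eq_add_of_le hkl
    rw [max_eq_right hkl]
    refine ⟨stmt10_aux1 u h k m, ?_⟩
    have := stmt10_aux1 (star u) hs k m
    simpa using this
  · obtain ⟨m, rfl⟩ := Nat.exists_eq_add_of_le hkl
    rw [max_eq_left hkl]
    refine ⟨stmt10_aux2 u h l m, ?_⟩
    have := stmt10_aux2 (star u) hs l m
    simpa using this
end

section
/- Let u be a power partial isometry on a Hilbert space. Then for all k, l ≥ 1 the projections p_k = u*^k u^k and q_l = u^l u*^l commute: p_k q_l = q_l p_k. -/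
/-- In a C*-algebra, if `p, q` are self-adjoint idempotents and `p*q` is
idempotent, then `p` and `q` commute. -/
lemma aux_comm {H : Type*} [NormedAddCommGroup H] [InnerProductSpace ℂ H] [CompleteSpace H]
    (p q : H →L[ℂ] H) (hp : star p = p) (hp2 : p * p = p) (hq : star q = q) (hq2 : q * q = q)
    (h : (p * q) * (p * q) = p * q) : p * q = q * p := by
  have hd : star (p * q - q * p * q) * (p * q - q * p * q) = 0 := by
    have e1 : q * p * (p * q) = q * (p * q) := by
      rw [mul_assoc q p, ← mul_assoc p p, hp2]
    have e2 : q * p * (q * p * q) = q * (p * q) := by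
      calc q * p * (q * p * q) = q * ((p * q) * (p * q)) := by noncomm_ring
        _ = q * (p * q) := by rw [h]
    have e3 : q * (p * q) * (p * q) = q * (p * q) := by
      calc q * (p * q) * (p * q) = q * ((p * q) * (p * q)) := by noncomm_ring
        _ = q * (p * q) := by rw [h]
    have e4 : q * (p * q) * (q * p * q) = q * (p * q) := by
      calc q * (p * q) * (q * p * q) = q * p * (q * q) * (p * q) := by noncomm_ring
        _ = q * ((p * q) * (p * q)) := by rw [hq2]; noncomm_ring
        _ = q * (p * q) := by rw [h]
    simp only [star_sub, star_mul, hp, hq]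
    rw [sub_mul, mul_sub, mul_sub]
    rw [e1, e2, e3, e4]
    abel
  have hd0 : p * q - q * p * q = 0 := (CStarRing.star_mul_self_eq_zero_iff _).mp hd
  have key : p * q = q * p * q := by rwa [sub_eq_zero] at hd0
  have : q * p = star (p * q) := by simp [star_mul, hp, hq]
  rw [this, key]
  simp [star_mul, hp, hq, mul_assoc]

/-- For a power partial isometry `u`, the projections `p_k = u*ᵏ uᵏ` and
`q_l = uˡ u*ˡ` commute for all `k, l ≥ 1`. -/
theorem stmt_11 {H : Type*} [NormedAddCommGroup H] [InnerProductSpace ℂ H] [CompleteSpace H]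
    (u : H →L[ℂ] H)
    (hpow : ∀ k : ℕ, 1 ≤ k → u ^ k * (star u) ^ k * u ^ k = u ^ k) :
    ∀ k l : ℕ, 1 ≤ k → 1 ≤ l →
      ((star u) ^ k * u ^ k) * (u ^ l * (star u) ^ l) =
        (u ^ l * (star u) ^ l) * ((star u) ^ k * u ^ k) := by
  intro k l hk hl
  set a := u ^ k with ha_def
  set b := u ^ l with hb_def
  have hsa : star a = (star u) ^ k := by rw [ha_def, star_pow]
  have hsb : star b = (star u) ^ l := by rw [hb_def, star_pow]
  have ha : a * star a * a = a := by rw [hsa]; exact hpow k hk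
  have hb : b * star b * b = b := by rw [hsb]; exact hpow l hl
  have hc : (a * b) * star (a * b) * (a * b) = a * b := by
    have := hpow (k + l) (le_trans hk (Nat.le_add_right k l))
    rw [pow_add, add_comm k l, pow_add] at this
    rw [star_mul, hsa, hsb]
    calc a * b * ((star u) ^ l * (star u) ^ k) * (a * b)
        = u ^ k * u ^ l * ((star u) ^ l * (star u) ^ k) * (u ^ k * u ^ l) := by
          rw [ha_def, hb_def]
      _ = u ^ k * u ^ l := this
      _ = a * b := rfl
  rw [← hsa, ← hsb]
  apply aux_comm
  · simp [star_mul]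
  · calc star a * a * (star a * a) = star a * (a * star a * a) := by noncomm_ring
      _ = star a * a := by rw [ha]
  · simp [star_mul]
  · calc b * star b * (b * star b) = (b * star b * b) * star b := by noncomm_ring
      _ = b * star b := by rw [hb]
  · have := congrArg (fun x => star a * x * star b) hc
    simp only [star_mul] at this
    calc star a * a * (b * star b) * (star a * a * (b * star b))
        = star a * (a * b * (star b * star a) * (a * b)) * star b := by noncomm_ring
      _ = star a * (a * b) * star b := by rw [← star_mul, hc]
      _ = star a * a * (b * star b) := by noncomm_ring
end

section
/- Let u be a power partial isometry. Then for all k, l, m ≥ 0 the element p_k q_l u^m (where p_k = u*^k u^k, q_l = u^l u*^l, u^0 = 1) is a partial isometry, with (p_k q_l u^m)(p_k q_l u^m)* = p_k q_{max(l,m)}. -/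
/-- Two self-adjoint idempotents whose product is idempotent commute. -/
private lemma proj_comm {A : Type*} [NonUnitalNormedRing A] [StarRing A] [CStarRing A]
    {P Q : A} (hP : star P = P) (hQ : star Q = Q) (hP2 : P * P = P) (hQ2 : Q * Q = Q)
    (h : P * Q * P * Q = P * Q) : P * Q = Q * P := by
  have h' : Q * P * Q * P = Q * P := by
    have := congrArg star h
    simpa [star_mul, hP, hQ, mul_assoc] using this
  have key : P * Q - P * Q * P = 0 := by
    rw [← CStarRing.mul_star_self_eq_zero_iff]
    have hstar : star (P * Q - P * Q * P) = Q * P - P * Q * P := by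
      simp [star_mul, star_sub, hP, hQ, mul_assoc]
    rw [hstar]
    have e1 : (P * Q) * (Q * P) = P * Q * P := by
      rw [show (P * Q) * (Q * P) = P * (Q * Q) * P by noncomm_ring, hQ2]
    have e2 : (P * Q) * (P * Q * P) = P * Q * P := by
      rw [show (P * Q) * (P * Q * P) = (P * Q * P * Q) * P by noncomm_ring, h]
    have e3 : (P * Q * P) * (Q * P) = P * Q * P := by
      rw [show (P * Q * P) * (Q * P) = P * (Q * P * Q * P) by noncomm_ring, h']
      noncomm_ring
    have e4 : (P * Q * P) * (P * Q * P) = P * Q * P := by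
      rw [show (P * Q * P) * (P * Q * P) = P * Q * (P * P) * Q * P by noncomm_ring, hP2,
        show P * Q * P * Q * P = (P * Q * P * Q) * P by noncomm_ring, h]
    rw [sub_mul, mul_sub, mul_sub, e1, e2, e3, e4]
    simp
  have hPQ : P * Q = P * Q * P := by rwa [sub_eq_zero] at key
  calc P * Q = P * Q * P := hPQ
    _ = star (P * Q * P) := by simp [star_mul, hP, hQ, mul_assoc]
    _ = star (P * Q) := by rw [← hPQ]
    _ = Q * P := by simp [star_mul, hP, hQ]

/-- For a power partial isometry `u`, the element `p_k q_l uᵐ`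
(`p_k = u*ᵏ uᵏ`, `q_l = uˡ u*ˡ`, `u⁰ = 1`) is a partial isometry with final
projection `p_k q_{max(l,m)}`, for all `k, l, m ≥ 0`. -/
theorem stmt_12 {H : Type*} [NormedAddCommGroup H] [InnerProductSpace ℂ H] [CompleteSpace H]
    (u : H →L[ℂ] H)
    (hpow : ∀ k : ℕ, 1 ≤ k → u ^ k * (star u) ^ k * u ^ k = u ^ k) :
    ∀ k l m : ℕ,
      (((star u) ^ k * u ^ k) * (u ^ l * (star u) ^ l) * u ^ m) *
          star (((star u) ^ k * u ^ k) * (u ^ l * (star u) ^ l) * u ^ m) *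
          (((star u) ^ k * u ^ k) * (u ^ l * (star u) ^ l) * u ^ m) =
        ((star u) ^ k * u ^ k) * (u ^ l * (star u) ^ l) * u ^ m ∧
      (((star u) ^ k * u ^ k) * (u ^ l * (star u) ^ l) * u ^ m) *
          star (((star u) ^ k * u ^ k) * (u ^ l * (star u) ^ l) * u ^ m) =
        ((star u) ^ k * u ^ k) * (u ^ max l m * (star u) ^ max l m) := by
  set s : H →L[ℂ] H := star u with hs_def
  -- basic identities
  have hq : ∀ a : ℕ, u ^ a * s ^ a * u ^ a = u ^ a := by
    intro a
    rcases Nat.eq_zero_or_pos a with rfl | ha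
    · simp
    · exact hpow a ha
  have hsq : ∀ a : ℕ, s ^ a * u ^ a * s ^ a = s ^ a := by
    intro a
    have := congrArg star (hq a)
    simpa [star_mul, hs_def, star_pow, mul_assoc] using this
  -- q_a q_b = q_{max a b}
  have qmul : ∀ a b : ℕ, (u ^ a * s ^ a) * (u ^ b * s ^ b) = u ^ max a b * s ^ max a b := by
    intro a b
    rcases le_total a b with hab | hab
    · obtain ⟨c, rfl⟩ := Nat.exists_eq_add_of_le hab
      rw [Nat.max_eq_right hab]
      calc (u ^ a * s ^ a) * (u ^ (a + c) * s ^ (a + c))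
          = (u ^ a * s ^ a * u ^ a) * (u ^ c * s ^ (a + c)) := by
            rw [pow_add]; noncomm_ring
        _ = u ^ a * u ^ c * s ^ (a + c) := by rw [hq a]; noncomm_ring
        _ = u ^ (a + c) * s ^ (a + c) := by rw [← pow_add]
    · obtain ⟨c, rfl⟩ := Nat.exists_eq_add_of_le hab
      rw [Nat.max_eq_left hab]
      calc (u ^ (b + c) * s ^ (b + c)) * (u ^ b * s ^ b)
          = u ^ (b + c) * s ^ c * (s ^ b * u ^ b * s ^ b) := by
            rw [show (b + c) = c + b from Nat.add_comm b c, pow_add s]; noncomm_ring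
        _ = u ^ (b + c) * (s ^ c * s ^ b) := by rw [hsq b]; noncomm_ring
        _ = u ^ (b + c) * s ^ (b + c) := by
            rw [← pow_add, Nat.add_comm c b]
  -- p p = p, q q = q
  have hpp : ∀ a : ℕ, (s ^ a * u ^ a) * (s ^ a * u ^ a) = s ^ a * u ^ a := by
    intro a
    calc (s ^ a * u ^ a) * (s ^ a * u ^ a) = s ^ a * (u ^ a * s ^ a * u ^ a) := by noncomm_ring
      _ = s ^ a * u ^ a := by rw [hq a]
  -- p_k commutes with q_l
  have pq_comm : ∀ a b : ℕ, (s ^ a * u ^ a) * (u ^ b * s ^ b) = (u ^ b * s ^ b) * (s ^ a * u ^ a) := by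
    intro a b
    apply proj_comm
    · simp [hs_def, star_mul, star_pow]
    · simp [hs_def, star_mul, star_pow]
    · exact hpp a
    · have := qmul b b; simpa using this
    · -- P Q P Q = P Q from hpow (a + b)
      have h0 : u ^ a * u ^ b * (s ^ b * s ^ a) * (u ^ a * u ^ b) = u ^ a * u ^ b := by
        have := hq (a + b)
        rw [pow_add u, show s ^ (a + b) = s ^ b * s ^ a by rw [← pow_add, Nat.add_comm]] at this
        exact this
      have := congrArg (fun x => s ^ a * x * s ^ b) h0
      beta_reduce at this
      calc (s ^ a * u ^ a) * (u ^ b * s ^ b) * (s ^ a * u ^ a) * (u ^ b * s ^ b)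
          = s ^ a * (u ^ a * u ^ b * (s ^ b * s ^ a) * (u ^ a * u ^ b)) * s ^ b := by noncomm_ring
        _ = s ^ a * (u ^ a * u ^ b) * s ^ b := by rw [h0]
        _ = (s ^ a * u ^ a) * (u ^ b * s ^ b) := by noncomm_ring
  intro k l m
  set P : H →L[ℂ] H := s ^ k * u ^ k with hP_def
  have hQ : ∀ a : ℕ, True := fun _ => trivial
  set M := max l m with hM_def
  have hxstar : star (P * (u ^ l * s ^ l) * u ^ m) = s ^ m * (u ^ l * s ^ l) * P := by
    simp [hP_def, hs_def, star_mul, star_pow, mul_assoc]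
  have hqlm : (u ^ l * s ^ l) * (u ^ m * s ^ m) = u ^ M * s ^ M := qmul l m
  have hMl : (u ^ M * s ^ M) * (u ^ l * s ^ l) = u ^ M * s ^ M := by
    rw [qmul M l, Nat.max_eq_left (le_max_left l m)]
  have hMM : (u ^ M * s ^ M) * (u ^ M * s ^ M) = u ^ M * s ^ M := by
    rw [qmul M M]; simp
  -- x x* = P q_M
  have hxx : (P * (u ^ l * s ^ l) * u ^ m) * star (P * (u ^ l * s ^ l) * u ^ m)
      = P * (u ^ M * s ^ M) := by
    rw [hxstar]
    calc (P * (u ^ l * s ^ l) * u ^ m) * (s ^ m * (u ^ l * s ^ l) * P)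
        = P * ((u ^ l * s ^ l) * (u ^ m * s ^ m) * (u ^ l * s ^ l)) * P := by noncomm_ring
      _ = P * ((u ^ M * s ^ M) * (u ^ l * s ^ l)) * P := by rw [hqlm]
      _ = P * (u ^ M * s ^ M) * P := by rw [hMl]
      _ = P * ((u ^ M * s ^ M) * P) := by rw [mul_assoc]
      _ = P * (P * (u ^ M * s ^ M)) := by rw [← pq_comm k M]
      _ = (P * P) * (u ^ M * s ^ M) := by simp only [hP_def, mul_assoc]
      _ = P * (u ^ M * s ^ M) := by rw [hpp k]
  refine ⟨?_, hxx⟩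
  -- x x* x = x
  rw [hxx]
  -- q_l u^m = q_M u^m
  have hql_um : (u ^ l * s ^ l) * u ^ m = (u ^ M * s ^ M) * u ^ m := by
    calc (u ^ l * s ^ l) * u ^ m = (u ^ l * s ^ l) * (u ^ m * s ^ m * u ^ m) := by rw [hq m]
      _ = ((u ^ l * s ^ l) * (u ^ m * s ^ m)) * u ^ m := by simp only [mul_assoc]
      _ = (u ^ M * s ^ M) * u ^ m := by rw [hqlm]
  calc P * (u ^ M * s ^ M) * (P * (u ^ l * s ^ l) * u ^ m)
      = P * (u ^ M * s ^ M) * P * ((u ^ l * s ^ l) * u ^ m) := by noncomm_ring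
    _ = P * (u ^ M * s ^ M) * P * ((u ^ M * s ^ M) * u ^ m) := by rw [hql_um]
    _ = P * ((u ^ M * s ^ M) * P) * ((u ^ M * s ^ M) * u ^ m) := by rw [mul_assoc P]
    _ = P * (P * (u ^ M * s ^ M)) * ((u ^ M * s ^ M) * u ^ m) := by rw [← pq_comm k M]
    _ = (P * P) * ((u ^ M * s ^ M) * (u ^ M * s ^ M)) * u ^ m := by noncomm_ring
    _ = P * (u ^ M * s ^ M) * u ^ m := by rw [hpp k, hMM]
    _ = P * ((u ^ M * s ^ M) * u ^ m) := by rw [mul_assoc]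
    _ = P * ((u ^ l * s ^ l) * u ^ m) := by rw [← hql_um]
    _ = P * (u ^ l * s ^ l) * u ^ m := by simp only [hP_def, mul_assoc]
end
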